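/- For any dimension $d\geq 1$, shape parameters $a,b>0$ and scale $c>0$, the marginal density of $\boldsymbol{\beta}\in\mathbb{R}^d$ obtained by mixing $N_d(\mathbf{0},\tau^2 I_d)$ over $\tau^2\sim \mathrm{SBP}(a,b,c)$ is $p(\boldsymbol{\beta})=\frac{\Gamma(b+d/2)}{(2\pi c)^{d/2}B(a,b)}\,\mathcal{U}\big(b+d/2,\,-a+d/2+1,\,\|\boldsymbol{\beta}\|_2^2/(2c)\big)$, where $\mathcal{U}$ is the confluent hypergeometric function of the second kind (Kummer's U). -/

import Mathlib

open MeasureTheory Real Set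

/-- Kummer's confluent hypergeometric function of the second kind, via its
integral representation (valid for `α > 0`, `z > 0`). -/
noncomputable def kummerU (α γ z : ℝ) : ℝ :=
  (1 / Real.Gamma α) *
    ∫ t in Ioi (0:ℝ), Real.exp (-z * t) * t ^ (α - 1) * (1 + t) ^ (γ - α - 1)

/-- The beta function B(a,b). -/
noncomputable def betaFn (a b : ℝ) : ℝ :=
  Real.Gamma a * Real.Gamma b / Real.Gamma (a + b)

lemma pointwise_key (r a b s c x : ℝ) (hc : 0 < c) (hx : 0 < x) :
    (2 * π * x) ^ (-r) * Real.exp (-s / (2 * x)) *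
      (1 / (c * betaFn a b) * (x / c) ^ (a - 1) * (1 + x / c) ^ (-(a + b))) =
    ((2 * π * c) ^ (-r) / betaFn a b * c) *
      (|(-1 : ℝ)| * x ^ ((-1 : ℝ) - 1) *
        (Real.exp (-(s / (2 * c)) * (c * x ^ (-1:ℝ))) * (c * x ^ (-1:ℝ)) ^ (b + r - 1) *
          (1 + c * x ^ (-1:ℝ)) ^ (-(a + b)))) := by
  have h2π : (0:ℝ) < 2 * π := by positivity
  have hxc : (0:ℝ) < x + c := by linarith
  have hB : (1 + x / c) = (x + c) / c := by field_simp; try ring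
  have hB' : (1 + c * x ^ (-1:ℝ)) = (x + c) / x := by
    rw [Real.rpow_neg_one]; field_simp; try ring
  have hexp : -s / (2 * x) = -(s / (2 * c)) * (c * x ^ (-1:ℝ)) := by
    rw [Real.rpow_neg_one]; field_simp
  rw [hexp, hB, hB', abs_neg, abs_one,
    Real.mul_rpow h2π.le hx.le, Real.mul_rpow h2π.le hc.le,
    Real.div_rpow hx.le hc.le, Real.div_rpow hxc.le hc.le, Real.div_rpow hxc.le hx.le,
    Real.mul_rpow hc.le (Real.rpow_nonneg hx.le _)]
  have hx1 : x ^ (a - 1 - r) = x ^ (a - 1) * x ^ (-r) := by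
    rw [← Real.rpow_add hx]; ring_nf
  have hb1 : c ^ b = c⁻¹ * (c ^ (a - 1))⁻¹ * (c ^ (-(a + b)))⁻¹ := by
    rw [← Real.rpow_neg_one c, ← Real.rpow_neg hc.le, ← Real.rpow_neg hc.le,
      ← Real.rpow_add hc, ← Real.rpow_add hc]
    ring_nf
  have hx2 : x ^ (a - 1 - r) =
      x ^ ((-1:ℝ) - 1) * (x ^ (-1:ℝ)) ^ (b + r - 1) * (x ^ (-(a + b)))⁻¹ := by
    rw [← Real.rpow_neg hx.le, ← Real.rpow_mul hx.le, ← Real.rpow_add hx, ← Real.rpow_add hx]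
    ring_nf
  have hc2 : c ^ b = c ^ (-r) * c * c ^ (b + r - 1) := by
    have h1 : c ^ (-r) * c = c ^ (-r + 1) := (Real.rpow_add_one hc.ne' (-r)).symm
    rw [h1, ← Real.rpow_add hc]; ring_nf
  trans ((2 * π) ^ (-r) * Real.exp (-(s / (2 * c)) * (c * x ^ (-1:ℝ))) *
      (betaFn a b)⁻¹ * (x + c) ^ (-(a + b)) * x ^ (a - 1 - r) * c ^ b)
  · conv_rhs => rw [hx1, hb1]
    ring
  · conv_lhs => rw [hx2, hc2]
    ring

/-- Mixing `N_d(0, τ² I_d)` over `τ² ~ SBP(a,b,c)` yields the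
group horseshoe-like marginal density
`Γ(b+d/2) / ((2πc)^{d/2} B(a,b)) · U(b+d/2, -a+d/2+1, ‖β‖²/(2c))`. -/
theorem marginal_spike_slab
    (d : ℕ) (hd : 1 ≤ d) (a b c : ℝ) (ha : 0 < a) (hb : 0 < b) (hc : 0 < c)
    (β : EuclideanSpace ℝ (Fin d)) :
    (∫ τ2 in Ioi (0:ℝ),
        (2 * π * τ2) ^ (-(d : ℝ) / 2) * Real.exp (-‖β‖ ^ 2 / (2 * τ2)) *
          (1 / (c * betaFn a b) * (τ2 / c) ^ (a - 1) * (1 + τ2 / c) ^ (-(a + b)))) =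
      Real.Gamma (b + d / 2) / ((2 * π * c) ^ ((d : ℝ) / 2) * betaFn a b) *
        kummerU (b + d / 2) (-a + d / 2 + 1) (‖β‖ ^ 2 / (2 * c)) := by
  set r : ℝ := (d : ℝ) / 2 with hr
  set s : ℝ := ‖β‖ ^ 2 with hs
  set g : ℝ → ℝ := fun t =>
    Real.exp (-(s / (2 * c)) * t) * t ^ (b + r - 1) * (1 + t) ^ (-(a + b)) with hg
  have step1 : (∫ τ2 in Ioi (0:ℝ),
        (2 * π * τ2) ^ (-(d : ℝ) / 2) * Real.exp (-s / (2 * τ2)) *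
          (1 / (c * betaFn a b) * (τ2 / c) ^ (a - 1) * (1 + τ2 / c) ^ (-(a + b)))) =
      ∫ x in Ioi (0:ℝ), ((2 * π * c) ^ (-r) / betaFn a b * c) *
        ((|(-1 : ℝ)| * x ^ ((-1 : ℝ) - 1)) • g (c * x ^ (-1:ℝ))) := by
    refine setIntegral_congr_fun measurableSet_Ioi (fun x hx => ?_)
    rw [smul_eq_mul, show -(d:ℝ)/2 = -r by rw [hr]; ring]
    exact pointwise_key r a b s c x hc hx
  rw [step1, MeasureTheory.integral_const_mul,
    integral_comp_rpow_Ioi (fun t => g (c * t)) (by norm_num : (-1:ℝ) ≠ 0),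
    integral_comp_mul_left_Ioi g 0 hc]
  have hΓ : Real.Gamma (b + r) ≠ 0 := (Real.Gamma_pos_of_pos (by positivity)).ne'
  have hU : kummerU (b + r) (-a + r + 1) (s / (2 * c)) =
      (1 / Real.Gamma (b + r)) * ∫ t in Ioi (0:ℝ), g t := by
    rw [kummerU, hg]
    congr 1
    refine setIntegral_congr_fun measurableSet_Ioi (fun t ht => ?_)
    show Real.exp (-(s / (2 * c)) * t) * t ^ (b + r - 1) *
        (1 + t) ^ ((-a + r + 1) - (b + r) - 1) =
      Real.exp (-(s / (2 * c)) * t) * t ^ (b + r - 1) * (1 + t) ^ (-(a + b))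
    rw [show (-a + r + 1) - (b + r) - 1 = -(a + b) by ring, neg_mul]
  rw [show b + (d:ℝ)/2 = b + r from rfl] at *
  rw [hU, smul_eq_mul, Real.rpow_neg (by positivity : (0:ℝ) ≤ 2 * π * c)]
  field_simp
  rw [mul_zero]
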